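/- arXiv:2104.06361 — 6 statements merged into one kernel-verified Lean document; each statement's English description precedes it below -/
import Mathlib

section
/- Let z be a nonzero Gaussian integer. Then every Gaussian integer u with 4·N(u) < N(z) lies in the strict fundamental domain 𝓕°(z), and every Gaussian integer u lying in 𝓕°(z) satisfies 2·N(u) ≤ N(z). (That is, { u ∈ ℤ[i] : N(u) < N(z)/4 } ⊆ 𝓕°(z) ∩ ℤ[i] ⊆ { u ∈ ℤ[i] : N(u) ≤ N(z)/2 }.) -/
/-- The strict fundamental domain `𝓕°(z)` of a Gaussian integer `z`:
the open square `{ z(α + βi) : -1/2 < α < 1/2, -1/2 < β < 1/2 }` in `ℂ`. -/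
def FdO (z : GaussianInt) : Set ℂ :=
  { w | ∃ α β : ℝ, w = (GaussianInt.toComplex z) * (α + β * Complex.I) ∧
      -(1/2 : ℝ) < α ∧ α < 1/2 ∧ -(1/2 : ℝ) < β ∧ β < 1/2 }

/-- For a nonzero Gaussian integer `z`: every Gaussian integer `u` with
`4 * N(u) < N(z)` lies in the strict fundamental domain `𝓕°(z)`, and every Gaussian
integer `u` lying in `𝓕°(z)` satisfies `2 * N(u) ≤ N(z)`. -/
theorem FdO_sandwich (z : GaussianInt) (hz : z ≠ 0) :
    (∀ u : GaussianInt, 4 * u.norm < z.norm → GaussianInt.toComplex u ∈ FdO z) ∧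
    (∀ u : GaussianInt, GaussianInt.toComplex u ∈ FdO z → 2 * u.norm ≤ z.norm) := by
  have hzc : (GaussianInt.toComplex z) ≠ 0 := by
    simpa [GaussianInt.toComplex_eq_zero] using hz
  have hNz : (0 : ℝ) < Complex.normSq (GaussianInt.toComplex z) :=
    Complex.normSq_pos.2 hzc
  constructor
  · intro u hu
    set w : ℂ := GaussianInt.toComplex u / GaussianInt.toComplex z with hw
    have hur : ((4 * u.norm : ℤ) : ℝ) < ((z.norm : ℤ) : ℝ) := by exact_mod_cast hu
    have hns : Complex.normSq w < 1/4 := by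
      rw [hw, Complex.normSq_div, div_lt_iff₀ hNz, ← GaussianInt.intCast_real_norm,
        ← GaussianInt.intCast_real_norm]
      push_cast at hur ⊢
      linarith
    have h1 : w.re ^ 2 + w.im ^ 2 < 1/4 := by
      have := hns
      rw [Complex.normSq_apply] at this
      nlinarith
    refine ⟨w.re, w.im, ?_, by nlinarith [sq_nonneg w.im], by nlinarith [sq_nonneg w.im],
      by nlinarith [sq_nonneg w.re], by nlinarith [sq_nonneg w.re]⟩
    rw [Complex.re_add_im, hw, mul_div_cancel₀ _ hzc]
  · intro u ⟨α, β, heq, ha1, ha2, hb1, hb2⟩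
    have hns : Complex.normSq (GaussianInt.toComplex u)
        = Complex.normSq (GaussianInt.toComplex z) * (α ^ 2 + β ^ 2) := by
      rw [heq, Complex.normSq_mul]
      congr 1
      rw [Complex.normSq_apply]
      simp
      ring
    have : ((2 * u.norm : ℤ) : ℝ) ≤ ((z.norm : ℤ) : ℝ) := by
      rw [← GaussianInt.intCast_real_norm] at hns
      push_cast
      rw [hns, GaussianInt.intCast_real_norm z]
      have hab : α ^ 2 + β ^ 2 < 1/2 := by nlinarith
      nlinarith [mul_lt_mul_of_pos_left hab hNz]
    exact_mod_cast this
end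

section
/- Let v₁, v₂, z be Gaussian integers with z ≠ 0 such that v₁, v₂ ∈ 𝓕̄(z). If v₁ ≡ v₂ (mod z) and v₁ ∈ 𝓕°(z), then v₁ = v₂. -/
/-- The closed fundamental domain `𝓕̄(z)` of a Gaussian integer `z`:
the closed square `{ z(α + βi) : -1/2 ≤ α ≤ 1/2, -1/2 ≤ β ≤ 1/2 }` in `ℂ`. -/
def FdC (z : GaussianInt) : Set ℂ :=
  { w | ∃ α β : ℝ, w = (GaussianInt.toComplex z) * (α + β * Complex.I) ∧
      -(1/2 : ℝ) ≤ α ∧ α ≤ 1/2 ∧ -(1/2 : ℝ) ≤ β ∧ β ≤ 1/2 }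

/-- If `v₁, v₂ ∈ 𝓕̄(z)`, `v₁ ≡ v₂ (mod z)` and `v₁ ∈ 𝓕°(z)`, then `v₁ = v₂`. -/
theorem eq_of_congruent_mem_FdO (v₁ v₂ z : GaussianInt) (hz : z ≠ 0)
    (h₁ : GaussianInt.toComplex v₁ ∈ FdC z) (h₂ : GaussianInt.toComplex v₂ ∈ FdC z)
    (hcong : z ∣ v₁ - v₂) (ho : GaussianInt.toComplex v₁ ∈ FdO z) :
    v₁ = v₂ := by
  obtain ⟨q, hq⟩ := hcong
  obtain ⟨α₁, β₁, he₁, ha₁, ha₁', hb₁, hb₁'⟩ := ho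
  obtain ⟨α₂, β₂, he₂, ha₂, ha₂', hb₂, hb₂'⟩ := h₂
  have hzc : GaussianInt.toComplex z ≠ 0 := by
    simpa using hz
  have hqc : GaussianInt.toComplex q =
      ((α₁ - α₂ : ℝ) + (β₁ - β₂ : ℝ) * Complex.I) := by
    have := congrArg GaussianInt.toComplex hq
    rw [GaussianInt.toComplex_sub, GaussianInt.toComplex_mul, he₁, he₂] at this
    apply mul_left_cancel₀ hzc
    rw [← this]
    push_cast
    ring
  have hre : (q.re : ℝ) = α₁ - α₂ := by
    have := congrArg Complex.re hqc
    simpa [← GaussianInt.intCast_re, Complex.add_re, Complex.mul_re,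
      Complex.ofReal_re, Complex.ofReal_im, Complex.I_re, Complex.I_im] using this
  have him : (q.im : ℝ) = β₁ - β₂ := by
    have := congrArg Complex.im hqc
    simpa [← GaussianInt.intCast_im, Complex.add_im, Complex.mul_im,
      Complex.ofReal_re, Complex.ofReal_im, Complex.I_re, Complex.I_im] using this
  have hre0 : q.re = 0 := by
    have h1 : (q.re : ℝ) < 1 := by rw [hre]; linarith
    have h2 : (-1 : ℝ) < (q.re : ℝ) := by rw [hre]; linarith
    have h1' : q.re < 1 := by exact_mod_cast h1
    have h2' : (-1 : ℤ) < q.re := by exact_mod_cast h2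
    omega
  have him0 : q.im = 0 := by
    have h1 : (q.im : ℝ) < 1 := by rw [him]; linarith
    have h2 : (-1 : ℝ) < (q.im : ℝ) := by rw [him]; linarith
    have h1' : q.im < 1 := by exact_mod_cast h1
    have h2' : (-1 : ℤ) < q.im := by exact_mod_cast h2
    omega
  have : q = 0 := by
    ext <;> simp [hre0, him0]
  rw [this, mul_zero, sub_eq_zero] at hq
  exact hq
end

section
/- For every access structure 𝒜 on a finite set 𝒫 of n participants (a nonempty, upward-closed family of subsets of 𝒫 not containing the empty set) and every integer S, there exist nonzero Gaussian integers m₁, …, m_n and positive integers m⁻ < m⁺ with 4·m⁻ < m⁺ such that: (i) for every coalition C ⊆ 𝒫, either N(lcm{mᵢ : i ∈ C}) ≤ m⁻ or N(lcm{mᵢ : i ∈ C}) ≥ m⁺; (ii) 𝒜 = { A ⊆ 𝒫 : N(lcm{mᵢ : i ∈ A}) ≥ m⁺ }; and (iii) the set { s ∈ ℤ[i] : m⁻ ≤ N(s) < m⁺/4 } has cardinality at least S. -/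
/-- `L` is a least common multiple of the family `{m i : i ∈ C}` in `ℤ[i]`. -/
def IsLcm {ι : Type*} (C : Finset ι) (m : ι → GaussianInt) (L : GaussianInt) : Prop :=
  (∀ i ∈ C, m i ∣ L) ∧ ∀ K : GaussianInt, (∀ i ∈ C, m i ∣ K) → L ∣ K

namespace MignotteAux

open Zsqrtd

lemma gnorm_nonneg (a : GaussianInt) : 0 ≤ a.norm := norm_nonneg (by norm_num) a

lemma two_le_norm {q : GaussianInt} (h : Irreducible q) : (2:ℤ) ≤ q.norm := by
  have h0 : q.norm ≠ 0 := fun hn => h.ne_zero ((norm_eq_zero_iff (by norm_num) q).mp hn)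
  have h1 : q.norm ≠ 1 := fun hn => h.not_isUnit ((norm_eq_one_iff' (by norm_num) q).mp hn)
  have h2 := gnorm_nonneg q
  omega

lemma norm_dvd_norm {a b : GaussianInt} (h : a ∣ b) : a.norm ∣ b.norm := by
  obtain ⟨c, rfl⟩ := h; exact ⟨c.norm, norm_mul a c⟩

lemma norm_le_norm_of_dvd {a b : GaussianInt} (h : a ∣ b) (hb : b ≠ 0) :
    a.norm ≤ b.norm := by
  obtain ⟨c, rfl⟩ := h
  have hc : c ≠ 0 := by rintro rfl; simp at hb
  have hc1 : 1 ≤ c.norm := by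
    have h0 : c.norm ≠ 0 := fun hn => hc ((norm_eq_zero_iff (by norm_num) c).mp hn)
    have := gnorm_nonneg c; omega
  rw [norm_mul]
  exact le_mul_of_one_le_right (gnorm_nonneg a) hc1

lemma exists_gaussian_prime_factor {p : ℕ} (hp : p.Prime) :
    ∃ q : GaussianInt, Irreducible q ∧ q ∣ (p : GaussianInt) := by
  apply WfDvdMonoid.exists_irreducible_factor
  · intro hu
    have h1 := (norm_eq_one_iff' (by norm_num) _).mpr hu
    rw [norm_natCast] at h1
    have := hp.two_le
    nlinarith
  · exact_mod_cast Nat.cast_ne_zero.mpr hp.pos.ne'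

lemma coord_bound {x y M : ℤ} (h : x * x + y * y ≤ M) (hM : 1 ≤ M) :
    -M ≤ x ∧ x ≤ M := by
  constructor
  · nlinarith [sq_nonneg (x + 1), sq_nonneg y]
  · nlinarith [sq_nonneg (x - 1), sq_nonneg y]

end MignotteAux

set_option maxHeartbeats 1000000 in
open Zsqrtd MignotteAux in
/-- Any access structure can be realized by a Mignotte secret sharing scheme over
`ℤ[i]`, with a set of secrets of cardinality at least `S`. -/
theorem any_access_structure_realizable (n : ℕ) (𝒜 : Set (Finset (Fin n)))
    (h_ne : 𝒜.Nonempty)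
    (h_mono : ∀ A B : Finset (Fin n), A ∈ 𝒜 → A ⊆ B → B ∈ 𝒜)
    (h_empty : ∅ ∉ 𝒜) (S : ℤ) :
    ∃ (m : Fin n → GaussianInt) (mlo mhi : ℕ),
      (∀ i, m i ≠ 0) ∧ 0 < mlo ∧ mlo < mhi ∧ 4 * mlo < mhi ∧
      (∀ C : Finset (Fin n), ∀ L : GaussianInt, IsLcm C m L →
        (L.norm ≤ (mlo : ℤ) ∨ (mhi : ℤ) ≤ L.norm)) ∧
      𝒜 = { A : Finset (Fin n) | ∃ L : GaussianInt, IsLcm A m L ∧ (mhi : ℤ) ≤ L.norm } ∧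
      S ≤ (Set.ncard { s : GaussianInt | (mlo : ℤ) ≤ s.norm ∧ 4 * s.norm < (mhi : ℤ) } : ℤ) := by
  classical
  -- a family of pairwise distinct rational primes indexed by subsets
  obtain ⟨ep⟩ : Nonempty (Finset (Fin n) ≃ Fin (Fintype.card (Finset (Fin n)))) :=
    ⟨Fintype.equivFin _⟩
  set p : Finset (Fin n) → ℕ := fun B => Nat.nth Nat.Prime (ep B) with hp_def
  have hp : ∀ B, (p B).Prime := fun B => Nat.prime_nth_prime _
  have hpinj : Function.Injective p := by
    intro B B' h
    exact ep.injective (Fin.val_injective (Nat.nth_injective Nat.infinite_setOf_prime h))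
  -- a Gaussian prime factor of each
  have hq' : ∀ B, ∃ q : GaussianInt, Irreducible q ∧ q ∣ (p B : GaussianInt) :=
    fun B => exists_gaussian_prime_factor (hp B)
  choose q hqirr hqdvd using hq'
  have hq0 : ∀ B, q B ≠ 0 := fun B => (hqirr B).ne_zero
  have hqnorm : ∀ B, (2:ℤ) ≤ (q B).norm := fun B => two_le_norm (hqirr B)
  have hcop : ∀ B B', B ≠ B' → IsCoprime (q B) (q B') := by
    intro B B' hne
    have hcp : Nat.Coprime (p B) (p B') :=
      (Nat.coprime_primes (hp B) (hp B')).mpr (fun h => hne (hpinj h))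
    have h1 : IsCoprime (p B : GaussianInt) (p B' : GaussianInt) := by
      have := (Nat.isCoprime_iff_coprime.mpr hcp).map (Int.castRingHom GaussianInt)
      simpa using this
    exact (h1.of_isCoprime_of_dvd_left (hqdvd B)).of_isCoprime_of_dvd_right (hqdvd B')
  -- parameters
  set S' : ℕ := S.toNat with hS'_def
  set f : ℕ := S' + 4 with hf_def
  set e : ℕ := 2 * f with he_def
  set U : Finset (Finset (Fin n)) := Finset.univ.filter (fun B => B ∉ 𝒜) with hU_def
  have hUmem : ∀ B, B ∈ U ↔ B ∉ 𝒜 := by intro B; simp [hU_def]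
  have hUempty : (∅ : Finset (Fin n)) ∈ U := (hUmem ∅).mpr h_empty
  set nq : Finset (Fin n) → ℕ := fun B => (q B).norm.toNat with hnq_def
  have hnqcast : ∀ B, ((nq B : ℤ)) = (q B).norm :=
    fun B => Int.toNat_of_nonneg (gnorm_nonneg _)
  have hnq2 : ∀ B, 2 ≤ nq B := by
    intro B; have h1 := hqnorm B; have h2 := hnqcast B; omega
  set P : ℕ := ∏ B ∈ U, nq B with hP_def
  set mhi : ℕ := P ^ e with hmhi_def
  set mlo : ℕ := mhi / 2 ^ e with hmlo_def
  set m : Fin n → GaussianInt := fun i => ∏ B ∈ U.filter (fun B => i ∉ B), q B ^ e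
    with hm_def
  set L0 : Finset (Fin n) → GaussianInt :=
    fun C => ∏ B ∈ U.filter (fun B => ¬ C ⊆ B), q B ^ e with hL0_def
  -- generic facts
  have hprodne : ∀ T : Finset (Finset (Fin n)), (∏ B ∈ T, q B ^ e) ≠ 0 := fun T =>
    Finset.prod_ne_zero_iff.mpr (fun B _ => pow_ne_zero e (hq0 B))
  have hnormprod : ∀ T : Finset (Finset (Fin n)),
      (∏ B ∈ T, q B ^ e).norm = ∏ B ∈ T, (q B).norm ^ e := fun T => by
    have h := map_prod (normMonoidHom (d := -1)) (fun B => q B ^ e) T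
    simp only [map_pow] at h
    exact h
  have hmhiZ : (mhi : ℤ) = ∏ B ∈ U, (q B).norm ^ e := by
    rw [hmhi_def, hP_def, ← Finset.prod_pow]
    push_cast
    exact Finset.prod_congr rfl fun B _ => by rw [hnqcast]
  -- L0 C is an lcm of the family on C
  have hLcm : ∀ C, IsLcm C m (L0 C) := by
    intro C
    constructor
    · intro i hi
      apply Finset.prod_dvd_prod_of_subset
      intro B hB
      simp only [Finset.mem_filter] at hB ⊢
      exact ⟨hB.1, fun hCB => hB.2 (hCB hi)⟩
    · intro K hK
      apply Finset.prod_dvd_of_coprime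
      · intro B hB B' hB' hne
        exact (hcop B B' hne).pow
      · intro B hB
        simp only [Finset.mem_filter] at hB
        obtain ⟨i, hiC, hiB⟩ := Finset.not_subset.mp hB.2
        refine dvd_trans ?_ (hK i hiC)
        exact Finset.dvd_prod_of_mem _ (Finset.mem_filter.mpr ⟨hB.1, hiB⟩)
  -- any lcm has the same norm as L0
  have hnormL : ∀ C L, IsLcm C m L → L.norm = (L0 C).norm := by
    intro C L hL
    have h1 : L ∣ L0 C := hL.2 _ (hLcm C).1
    have h2 : L0 C ∣ L := (hLcm C).2 _ hL.1
    exact Int.dvd_antisymm (gnorm_nonneg _) (gnorm_nonneg _)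
      (norm_dvd_norm h1) (norm_dvd_norm h2)
  -- authorized coalitions: the norm is exactly mhi
  have hauth : ∀ C ∈ 𝒜, (L0 C).norm = (mhi : ℤ) := by
    intro C hC
    have hfil : U.filter (fun B => ¬ C ⊆ B) = U :=
      Finset.filter_eq_self.mpr (fun B hB hCB => (hUmem B).mp hB (h_mono C B hC hCB))
    simp only [hL0_def]
    rw [hfil, hnormprod, hmhiZ]
  -- unauthorized coalitions: the norm is at most mlo
  have hunauth : ∀ C ∉ 𝒜, (L0 C).norm ≤ (mlo : ℤ) := by
    intro C hC
    have hCU : C ∈ U := (hUmem C).mpr hC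
    have hsub : U.filter (fun B => ¬ C ⊆ B) ⊆ U.erase C := by
      intro B hB
      simp only [Finset.mem_filter] at hB
      refine Finset.mem_erase.mpr ⟨?_, hB.1⟩
      rintro rfl
      exact hB.2 (Finset.Subset.refl _)
    have hdvd : L0 C ∣ ∏ B ∈ U.erase C, q B ^ e :=
      Finset.prod_dvd_prod_of_subset _ _ _ hsub
    have hle : (L0 C).norm ≤ ∏ B ∈ U.erase C, (q B).norm ^ e :=
      (norm_le_norm_of_dvd hdvd (hprodne _)).trans_eq (hnormprod _)
    have hsplit : (∏ B ∈ U.erase C, (q B).norm ^ e) * (q C).norm ^ e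
        = ∏ B ∈ U, (q B).norm ^ e := Finset.prod_erase_mul U _ hCU
    have hposE : 0 ≤ ∏ B ∈ U.erase C, (q B).norm ^ e :=
      Finset.prod_nonneg (fun B _ => pow_nonneg (gnorm_nonneg _) e)
    have h2e : (2:ℤ)^e ≤ (q C).norm ^ e := pow_le_pow_left₀ (by norm_num) (hqnorm C) e
    have hkey : (L0 C).norm * 2^e ≤ (mhi : ℤ) := by
      calc (L0 C).norm * 2^e
          ≤ (∏ B ∈ U.erase C, (q B).norm ^ e) * (q C).norm ^ e :=
            mul_le_mul hle h2e (by positivity) hposE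
        _ = ∏ B ∈ U, (q B).norm ^ e := hsplit
        _ = (mhi : ℤ) := hmhiZ.symm
    have hN : 0 ≤ (L0 C).norm := gnorm_nonneg _
    have hNat : (L0 C).norm.toNat * 2 ^ e ≤ mhi := by
      have h2 : (((L0 C).norm.toNat * 2 ^ e : ℕ) : ℤ) ≤ (mhi : ℤ) := by
        push_cast
        rw [Int.toNat_of_nonneg hN]
        exact hkey
      exact_mod_cast h2
    have hfin : (L0 C).norm.toNat ≤ mlo :=
      (Nat.le_div_iff_mul_le (pow_pos two_pos e)).mpr hNat
    calc (L0 C).norm = ((L0 C).norm.toNat : ℤ) := (Int.toNat_of_nonneg hN).symm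
      _ ≤ (mlo : ℤ) := by exact_mod_cast hfin
  -- numeric facts
  have hP2 : 2 ≤ P := le_trans (hnq2 ∅)
    (Finset.single_le_prod' (fun B _ => le_trans (by norm_num) (hnq2 B)) hUempty)
  have hmhi2e : 2 ^ e ≤ mhi := by rw [hmhi_def]; exact Nat.pow_le_pow_left hP2 e
  have hmhipos : 0 < mhi := lt_of_lt_of_le (pow_pos two_pos e) hmhi2e
  have hmlopos : 0 < mlo := (Nat.one_le_div_iff (pow_pos two_pos e)).mpr hmhi2e
  have h4lo : 4 * mlo < mhi := by
    have h1 : mlo * 2 ^ e ≤ mhi := Nat.div_mul_le_self _ _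
    have h2 : (16:ℕ) ≤ 2 ^ e := by
      calc (16:ℕ) = 2 ^ 4 := by norm_num
        _ ≤ 2 ^ e := Nat.pow_le_pow_right (by norm_num) (by omega)
    have h3 : mlo * 16 ≤ mlo * 2 ^ e := Nat.mul_le_mul_left _ h2
    omega
  refine ⟨m, mlo, mhi, fun i => hprodne _, hmlopos, by omega, h4lo, ?_, ?_, ?_⟩
  · -- dichotomy
    intro C L hL
    rw [hnormL C L hL]
    by_cases hC : C ∈ 𝒜
    · exact Or.inr (hauth C hC).ge
    · exact Or.inl (hunauth C hC)
  · -- the access structure is realized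
    ext A
    constructor
    · intro hA
      exact ⟨L0 A, hLcm A, (hauth A hA).ge⟩
    · rintro ⟨L, hL, hnorm⟩
      by_contra hA
      have h1 := hunauth A hA
      rw [hnormL A L hL] at hnorm
      have h2 : (mhi : ℤ) ≤ (mlo : ℤ) := hnorm.trans h1
      have h3 : mhi ≤ mlo := by exact_mod_cast h2
      omega
  · -- enough secrets
    rcases le_or_gt S 0 with hS | hS
    · exact hS.trans (Int.natCast_nonneg _)
    set G : Set GaussianInt :=
      {s : GaussianInt | (mlo : ℤ) ≤ s.norm ∧ 4 * s.norm < (mhi : ℤ)} with hG_def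
    -- G is finite
    have hGsub : G ⊆ (fun z : ℤ × ℤ => (⟨z.1, z.2⟩ : GaussianInt)) ''
        (Set.Icc (-(mhi:ℤ)) mhi ×ˢ Set.Icc (-(mhi:ℤ)) mhi) := by
      intro s hs
      obtain ⟨hs1, hs2⟩ := hs
      have hn : s.norm = s.re * s.re + s.im * s.im := by rw [norm_def]; ring
      have hnn : 0 ≤ s.norm := gnorm_nonneg s
      have hbound : s.re * s.re + s.im * s.im ≤ (mhi : ℤ) := by omega
      have hm1 : (1:ℤ) ≤ (mhi : ℤ) := by exact_mod_cast hmhipos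
      have hre := coord_bound hbound hm1
      have him := coord_bound (by linarith : s.im * s.im + s.re * s.re ≤ (mhi : ℤ)) hm1
      exact ⟨(s.re, s.im), ⟨⟨hre.1, hre.2⟩, him.1, him.2⟩, rfl⟩
    have hGfin : G.Finite :=
      Set.Finite.subset (((Set.finite_Icc _ _).prod (Set.finite_Icc _ _)).image _) hGsub
    -- the interval of candidate secrets
    set a : ℕ := Nat.sqrt mlo + 1 with ha_def
    set c : ℕ := P ^ f / 2 ^ f with hc_def
    have hsqrt : Nat.sqrt mlo ≤ c := by
      have hy : 0 < 2 ^ f := pow_pos two_pos f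
      have hx : P ^ f < (c + 1) * 2 ^ f :=
        (Nat.div_lt_iff_lt_mul hy).mp (Nat.lt_succ_self c)
      have hmlo_lt : mlo < (c + 1) * (c + 1) := by
        rw [hmlo_def, hmhi_def]
        apply (Nat.div_lt_iff_lt_mul (pow_pos two_pos e)).mpr
        have hPe : P ^ e = P ^ f * P ^ f := by rw [he_def, two_mul, pow_add]
        have h2e : (2:ℕ) ^ e = 2 ^ f * 2 ^ f := by rw [he_def, two_mul, pow_add]
        rw [hPe, h2e]
        calc P ^ f * P ^ f < ((c + 1) * 2 ^ f) * ((c + 1) * 2 ^ f) :=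
              Nat.mul_lt_mul'' hx hx
          _ = (c + 1) * (c + 1) * (2 ^ f * 2 ^ f) := by ring
      have := Nat.sqrt_lt'.mpr (show mlo < (c + 1) ^ 2 by rw [pow_two]; exact hmlo_lt)
      omega
    have hc4 : 4 * c ≤ P ^ f := by
      have h4f : (4:ℕ) ≤ 2 ^ f := by
        calc (4:ℕ) = 2 ^ 2 := by norm_num
          _ ≤ 2 ^ f := Nat.pow_le_pow_right (by norm_num) (by omega)
      have h1 : c * 2 ^ f ≤ P ^ f := Nat.div_mul_le_self _ _
      have h2 : c * 4 ≤ c * 2 ^ f := Nat.mul_le_mul_left c h4f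
      omega
    have hXS : 4 * S' + 8 ≤ P ^ f := by
      have h1 : 2 ^ f ≤ P ^ f := Nat.pow_le_pow_left hP2 f
      have h2 : (2:ℕ) ^ f = 16 * 2 ^ S' := by rw [hf_def, pow_add]; ring
      have h3 : S' + 1 ≤ 2 ^ S' := Nat.lt_two_pow_self (n := S')
      omega
    have key : 2 * (a + S') ≤ P ^ f := by
      have ha : a ≤ c + 2 := by omega
      omega
    have hmhi_ff : mhi = P ^ f * P ^ f := by rw [hmhi_def, he_def, two_mul, pow_add]
    have hT : ∀ k ∈ Finset.Ico a (a + S'), ((k : GaussianInt)) ∈ G := by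
      intro k hk
      simp only [Finset.mem_Ico] at hk
      constructor
      · rw [Zsqrtd.norm_natCast]
        have h1 : mlo < (Nat.sqrt mlo + 1) * (Nat.sqrt mlo + 1) := by
          have := Nat.lt_succ_sqrt' mlo
          simpa [pow_two, Nat.succ_eq_add_one] using this
        have h2 : a * a ≤ k * k := Nat.mul_le_mul hk.1 hk.1
        have h3 : mlo ≤ k * k := by
          have : a * a = (Nat.sqrt mlo + 1) * (Nat.sqrt mlo + 1) := by rw [ha_def]
          omega
        exact_mod_cast Nat.cast_le.mpr h3
      · rw [Zsqrtd.norm_natCast]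
        have h2k : 2 * k < P ^ f := by omega
        have h4 : (2 * k) * (2 * k) < P ^ f * P ^ f := Nat.mul_lt_mul'' h2k h2k
        have h5 : 4 * (k * k) < mhi := by
          rw [hmhi_ff]
          calc 4 * (k * k) = (2 * k) * (2 * k) := by ring
            _ < P ^ f * P ^ f := h4
        have h6 : ((4 * (k * k) : ℕ) : ℤ) < ((mhi : ℕ) : ℤ) := by exact_mod_cast h5
        push_cast at h6 ⊢
        linarith
    have hsubG : ↑((Finset.Ico a (a + S')).image (fun k : ℕ => (k : GaussianInt))) ⊆ G := by
      intro s hs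
      simp only [Finset.coe_image, Set.mem_image, Finset.mem_coe] at hs
      obtain ⟨k, hk, rfl⟩ := hs
      exact hT k hk
    have hcard : ((Finset.Ico a (a + S')).image (fun k : ℕ => (k : GaussianInt))).card = S' := by
      rw [Finset.card_image_of_injective _ (fun x y h => by exact_mod_cast h), Nat.card_Ico]
      omega
    have hle := Set.ncard_le_ncard hsubG hGfin
    rw [Set.ncard_coe_finset, hcard] at hle
    have hS'eq : S = (S' : ℤ) := by rw [hS'_def]; exact (Int.toNat_of_nonneg hS.le).symm
    rw [hS'eq]
    exact_mod_cast hle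
end

section
/- (Correctness of the original Mignotte threshold scheme over ℤ.) Let m₁ < m₂ < ⋯ < m_n be pairwise coprime integers ≥ 2 with m_{n−t+2}⋯m_n < m₁⋯m_t, and let s be an integer with m_{n−t+2}⋯m_n < s < m₁⋯m_t. Let A ⊆ {1,…,n} with |A| ≥ t, and for each i ∈ A let sᵢ = s mod mᵢ. Then s is the unique integer x with 0 ≤ x < ∏_{i∈A} mᵢ satisfying x ≡ sᵢ (mod mᵢ) for all i ∈ A. -/
/-- `m⁻`: the product of the `t - 1` largest Mignotte moduli `m_{n-t+2} ⋯ m_n`. -/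
def mignotteLo (n t : ℕ) (m : Fin n → ℤ) : ℤ :=
  ∏ i ∈ Finset.univ.filter (fun i : Fin n => n - (t - 1) ≤ (i : ℕ)), m i

/-- `m⁺`: the product of the `t` smallest Mignotte moduli `m₁ ⋯ m_t`. -/
def mignotteHi (n t : ℕ) (m : Fin n → ℤ) : ℤ :=
  ∏ i ∈ Finset.univ.filter (fun i : Fin n => (i : ℕ) < t), m i

/-- Correctness of Mignotte's threshold scheme over `ℤ`: an authorized coalition `A`
(with `|A| ≥ t`) recovers the secret `s` as the unique `x` with
`0 ≤ x < ∏ i ∈ A, m i` satisfying `x ≡ s mod m i (mod m i)` for all `i ∈ A`. -/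
theorem mignotte_correct (n t : ℕ) (ht1 : 1 ≤ t) (htn : t ≤ n) (m : Fin n → ℤ)
    (hmono : StrictMono m) (h2 : ∀ i, 2 ≤ m i)
    (hcop : ∀ i j, i ≠ j → IsCoprime (m i) (m j))
    (hcond : mignotteLo n t m < mignotteHi n t m)
    (s : ℤ) (hs₁ : mignotteLo n t m < s) (hs₂ : s < mignotteHi n t m)
    (A : Finset (Fin n)) (hA : t ≤ A.card) :
    ∀ x : ℤ, (0 ≤ x ∧ x < ∏ i ∈ A, m i ∧ ∀ i ∈ A, x % m i = s % m i) ↔ x = s := by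
  have hpos : ∀ i, (0 : ℤ) < m i := fun i => lt_of_lt_of_le (by norm_num) (h2 i)
  -- the order embedding from Fin t into A
  have hf := A.orderEmbOfCardLe hA
  set f : Fin t ↪o Fin n := A.orderEmbOfCardLe hA with hfdef
  have hfmem : ∀ k, f k ∈ A := fun k => A.orderEmbOfCardLe_mem hA k
  have hkle : ∀ (j : ℕ) (h : j < t), j ≤ ((f ⟨j, h⟩ : Fin n) : ℕ) := by
    intro j
    induction j with
    | zero => intro h; exact Nat.zero_le _
    | succ j ih =>
      intro h
      have h' : j < t := Nat.lt_of_succ_lt h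
      have h1 : (f ⟨j, h'⟩ : Fin n) < f ⟨j + 1, h⟩ := f.strictMono (by simp [Fin.lt_def])
      have h2 := Fin.lt_iff_val_lt_val.mp h1
      have h3 := ih h'
      omega
  -- mignotteHi ≤ ∏ i ∈ A, m i
  have hHiA : mignotteHi n t m ≤ ∏ i ∈ A, m i := calc
    mignotteHi n t m = ∏ k : Fin t, m (Fin.castLE htn k) := by
      rw [mignotteHi]
      have hset : Finset.univ.filter (fun i : Fin n => (i : ℕ) < t)
          = Finset.map (Fin.castLEEmb htn) Finset.univ := by
        ext i
        simp only [Finset.mem_filter, Finset.mem_univ, true_and, Finset.mem_map]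
        constructor
        · intro h
          exact ⟨⟨(i : ℕ), h⟩, by ext; rfl⟩
        · rintro ⟨k, rfl⟩
          exact k.2
      rw [hset, Finset.prod_map]
      rfl
    _ ≤ ∏ k : Fin t, m (f k) := by
      apply Finset.prod_le_prod
      · intro k _; exact le_of_lt (hpos _)
      · intro k _
        apply hmono.monotone
        have := hkle k.1 k.2
        simpa [Fin.le_def] using this
    _ = ∏ i ∈ Finset.univ.map f.toEmbedding, m i := by rw [Finset.prod_map]; rfl
    _ ≤ ∏ i ∈ A, m i := by
      have hsub : Finset.univ.map f.toEmbedding ⊆ A := by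
        intro i hi
        simp only [Finset.mem_map] at hi
        obtain ⟨k, _, rfl⟩ := hi
        exact hfmem k
      rw [← Finset.prod_sdiff hsub]
      have h1 : (1 : ℤ) ≤ ∏ i ∈ A \ Finset.univ.map f.toEmbedding, m i := by
        calc (1 : ℤ) = ∏ _i ∈ A \ Finset.univ.map f.toEmbedding, (1 : ℤ) := by simp
          _ ≤ _ := Finset.prod_le_prod (fun _ _ => zero_le_one) (fun i _ => by linarith [h2 i])
      have h0 : (0 : ℤ) ≤ ∏ i ∈ Finset.univ.map f.toEmbedding, m i :=
        Finset.prod_nonneg fun i _ => le_of_lt (hpos i)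
      exact le_mul_of_one_le_left h0 h1
  have hLo1 : (1 : ℤ) ≤ mignotteLo n t m := by
    rw [mignotteLo]
    calc (1 : ℤ) = ∏ _i ∈ Finset.univ.filter (fun i : Fin n => n - (t - 1) ≤ (i : ℕ)), (1 : ℤ) := by
          simp
      _ ≤ _ := Finset.prod_le_prod (fun _ _ => zero_le_one) (fun i _ => by linarith [h2 i])
  have hs0 : (0 : ℤ) < s := by linarith
  have hsA : s < ∏ i ∈ A, m i := lt_of_lt_of_le hs₂ hHiA
  intro x
  constructor
  · rintro ⟨hx0, hxA, hxmod⟩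
    have hdvd : (∏ i ∈ A, m i) ∣ s - x := by
      apply Finset.prod_dvd_of_coprime
      · intro i hi j hj hij
        exact hcop i j hij
      · intro i hi
        exact (Int.ModEq.dvd (hxmod i hi : Int.ModEq (m i) x s))
    have habs : |s - x| < ∏ i ∈ A, m i := by
      rw [abs_lt]; constructor <;> linarith
    have : s - x = 0 := Int.eq_zero_of_abs_lt_dvd hdvd habs
    omega
  · rintro rfl
    exact ⟨le_of_lt hs0, hsA, fun i _ => rfl⟩
end

section
/- (Security of the original Mignotte threshold scheme over ℤ against small coalitions.) Let m₁ < m₂ < ⋯ < m_n be pairwise coprime integers ≥ 2 with m_{n−t+2}⋯m_n < m₁⋯m_t, and let s be an integer with m_{n−t+2}⋯m_n < s < m₁⋯m_t. Let B ⊆ {1,…,n} with |B| < t, and for each i ∈ B let sᵢ = s mod mᵢ. Then the unique integer x with 0 ≤ x < ∏_{i∈B} mᵢ satisfying x ≡ sᵢ (mod mᵢ) for all i ∈ B is different from s. -/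
theorem aux_sm {a : ℕ} (u : Fin a → ℕ) (hu : StrictMono u) :
    ∀ (d : ℕ) (i j : Fin a), (i : ℕ) + d = (j : ℕ) → u i + d ≤ u j := by
  intro d
  induction d with
  | zero =>
    intro i j h
    have : i = j := Fin.ext (by omega)
    simp [this]
  | succ d ih =>
    intro i j h
    have hlt : (i : ℕ) + d < a := by omega
    set j' : Fin a := ⟨(i : ℕ) + d, hlt⟩ with hj'
    have h1 := ih i j' rfl
    have h2 : u j' < u j := hu (by simp [Fin.lt_def, hj']; omega)
    omega

theorem card_top (n a : ℕ) :
    (Finset.univ.filter (fun i : Fin n => a ≤ (i : ℕ))).card = n - a := by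
  rw [Finset.card_filter]
  rw [Fin.sum_univ_eq_sum_range (fun i => if a ≤ i then 1 else 0)]
  rw [← Finset.card_filter]
  have : (Finset.range n).filter (fun i => a ≤ i) = Finset.Ico a n := by
    ext i; simp [Finset.mem_filter, Finset.mem_Ico, and_comm]
  rw [this, Nat.card_Ico]

theorem prod_le_top (n : ℕ) (m : Fin n → ℤ) (hmono : StrictMono m) (h2 : ∀ i, 2 ≤ m i)
    (B : Finset (Fin n)) (T : Finset (Fin n)) (hT : T = Finset.univ.filter (fun i : Fin n => n - T.card ≤ (i : ℕ)))
    (hc : B.card ≤ T.card) : ∏ i ∈ B, m i ≤ ∏ i ∈ T, m i := by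
  classical
  set c := B.card with hcB
  set d := T.card with hdT
  have hdn : d ≤ n := by
    have := card_top n (n - d)
    rw [← hT] at this
    omega
  set f := B.orderEmbOfFin hcB.symm with hf
  set g := T.orderEmbOfFin hdT.symm with hg
  -- upper bound on f
  have hfub : ∀ k : Fin c, (f k : ℕ) ≤ n - c + k := by
    intro k
    rcases Nat.eq_zero_or_pos c with h0 | hpos
    · exact absurd k.isLt (by omega)
    have hlast : c - 1 < c := by omega
    have := aux_sm (fun i => ((f i : Fin n) : ℕ)) (fun a b hab => by
      exact (f.strictMono hab)) ((c - 1) - k) k ⟨c - 1, hlast⟩ (by have := k.isLt; simp; omega)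
    have hfn : (f ⟨c - 1, hlast⟩ : ℕ) < n := (f ⟨c - 1, hlast⟩).isLt
    omega
  -- lower bound on g
  have hglb : ∀ j : Fin d, n - d + j ≤ (g j : ℕ) := by
    intro j
    have hpos : 0 < d := j.pos
    have h0 : (g ⟨0, hpos⟩ : Fin n) ∈ T := T.orderEmbOfFin_mem hdT.symm _
    rw [hT] at h0
    simp [Finset.mem_filter] at h0
    have := aux_sm (fun i => ((g i : Fin n) : ℕ)) (fun a b hab => g.strictMono hab)
      (j : ℕ) ⟨0, hpos⟩ j (by simp)
    omega
  -- injection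
  have hdc : ∀ k : Fin c, (k : ℕ) + (d - c) < d := by intro k; omega
  set φ : Fin c → Fin d := fun k => ⟨(k : ℕ) + (d - c), hdc k⟩ with hφ
  have hφinj : Function.Injective φ := by
    intro a b hab
    simp [hφ, Fin.ext_iff] at hab
    exact Fin.ext (by omega)
  have key : ∀ k : Fin c, m (f k) ≤ m (g (φ k)) := by
    intro k
    have h1 := hfub k
    have h2' := hglb (φ k)
    have : (f k : Fin n) ≤ g (φ k) := by
      rw [Fin.le_def]
      simp [hφ] at h2' ⊢
      omega
    exact hmono.monotone this
  have hBim : Finset.univ.image (fun k => (f k : Fin n)) = B := by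
    rw [← Finset.coe_inj, Finset.coe_image, Finset.coe_univ, Set.image_univ]
    exact B.range_orderEmbOfFin hcB.symm
  have hTim : Finset.univ.image (fun k => (g k : Fin n)) = T := by
    rw [← Finset.coe_inj, Finset.coe_image, Finset.coe_univ, Set.image_univ]
    exact T.range_orderEmbOfFin hdT.symm
  calc ∏ i ∈ B, m i = ∏ k : Fin c, m (f k) := by
        rw [← hBim, Finset.prod_image (fun a _ b _ h => f.injective h)]
    _ ≤ ∏ k : Fin c, m (g (φ k)) := Finset.prod_le_prod (fun k _ => by linarith [h2 (f k)]) (fun k _ => key k)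
    _ = ∏ j ∈ Finset.univ.image φ, m (g j) := by
        rw [Finset.prod_image (fun a _ b _ h => hφinj h)]
    _ ≤ ∏ j : Fin d, m (g j) := by
        rw [← Finset.prod_sdiff (Finset.subset_univ (Finset.univ.image φ))]
        have hone : (1:ℤ) ≤ ∏ j ∈ Finset.univ \ Finset.univ.image φ, m (g j) := by
          calc (1:ℤ) = ∏ _j ∈ Finset.univ \ Finset.univ.image φ, (1:ℤ) :=
                (Finset.prod_const_one).symm
            _ ≤ _ := Finset.prod_le_prod (fun _ _ => zero_le_one)
                (fun j _ => by linarith [h2 (g j)])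
        have hnn : (0:ℤ) ≤ ∏ j ∈ Finset.univ.image φ, m (g j) :=
          Finset.prod_nonneg (fun j _ => by linarith [h2 (g j)])
        exact le_mul_of_one_le_left hnn hone
    _ = ∏ i ∈ T, m i := by
        rw [← hTim, Finset.prod_image (fun a _ b _ h => g.injective h)]

/-- Security of Mignotte's threshold scheme over `ℤ`: an unauthorized coalition `B`
(with `|B| < t`) solving the congruence system obtains as unique solution `x` with
`0 ≤ x < ∏ i ∈ B, m i` an integer different from the secret `s`. -/
theorem mignotte_secure (n t : ℕ) (ht1 : 1 ≤ t) (htn : t ≤ n) (m : Fin n → ℤ)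
    (hmono : StrictMono m) (h2 : ∀ i, 2 ≤ m i)
    (hcop : ∀ i j, i ≠ j → IsCoprime (m i) (m j))
    (hcond : mignotteLo n t m < mignotteHi n t m)
    (s : ℤ) (hs₁ : mignotteLo n t m < s) (hs₂ : s < mignotteHi n t m)
    (B : Finset (Fin n)) (hB : B.card < t) :
    ∀ x : ℤ, 0 ≤ x → x < ∏ i ∈ B, m i → (∀ i ∈ B, x % m i = s % m i) → x ≠ s := by
  intro x hx0 hx1 _
  set T : Finset (Fin n) := Finset.univ.filter (fun i : Fin n => n - (t - 1) ≤ (i : ℕ)) with hTdef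
  have hTcard : T.card = t - 1 := by
    rw [hTdef, card_top]; omega
  have hle : ∏ i ∈ B, m i ≤ ∏ i ∈ T, m i := by
    apply prod_le_top n m hmono h2 B T
    · rw [hTcard]
    · omega
  have : x < s := by
    have : (∏ i ∈ T, m i) = mignotteLo n t m := rfl
    omega
  omega
end

section
/- Let m₁ < m₂ < ⋯ < m_n be positive integers with m_{n−t+2}⋯m_n < m₁⋯m_t (where 1 ≤ t ≤ n). Then for every coalition C ⊆ {1,…,n}: if |C| < t then ∏_{i∈C} mᵢ ≤ m_{n−t+2}⋯m_n, and if |C| ≥ t then ∏_{i∈C} mᵢ ≥ m₁⋯m_t. -/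
lemma mignotte_strictMono_val_le {k n : ℕ} (g : Fin k → Fin n) (hg : StrictMono g) :
    ∀ a (h : a < k), a ≤ (g ⟨a, h⟩ : ℕ) := by
  intro a
  induction a with
  | zero => intro h; exact Nat.zero_le _
  | succ b ih =>
    intro h
    have hb : b < k := by omega
    have h1 := ih hb
    have h2 : g ⟨b, hb⟩ < g ⟨b + 1, h⟩ := hg (by simp [Fin.lt_def])
    have h3 := Fin.lt_def.mp h2
    omega

lemma mignotte_strictMono_val_ge {k n : ℕ} (g : Fin k → Fin n) (hg : StrictMono g) :
    ∀ d a (h : a < k), a + d = k - 1 → (g ⟨a, h⟩ : ℕ) ≤ n - k + a := by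
  intro d
  induction d with
  | zero =>
    intro a h ha
    have := (g ⟨a, h⟩).isLt
    omega
  | succ e ih =>
    intro a h ha
    have h1 : a + 1 < k := by omega
    have h2 := ih (a + 1) h1 (by omega)
    have h3 : g ⟨a, h⟩ < g ⟨a + 1, h1⟩ := hg (by simp [Fin.lt_def])
    have h4 := Fin.lt_def.mp h3
    omega

lemma mignotte_prod_subset_le {α : Type*} [DecidableEq α] {s t : Finset α} (h : s ⊆ t)
    (f : α → ℤ) (hf : ∀ i, 1 ≤ f i) : ∏ i ∈ s, f i ≤ ∏ i ∈ t, f i := by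
  rw [← Finset.prod_sdiff h]
  have h1 : (1 : ℤ) ≤ ∏ i ∈ t \ s, f i := by
    calc (1 : ℤ) = ∏ _i ∈ t \ s, (1 : ℤ) := by simp
    _ ≤ ∏ i ∈ t \ s, f i :=
      Finset.prod_le_prod (fun _ _ => zero_le_one) (fun i _ => hf i)
  have h2 : (0 : ℤ) ≤ ∏ i ∈ s, f i :=
    Finset.prod_nonneg fun i _ => le_trans zero_le_one (hf i)
  nlinarith

/-- For strictly increasing positive moduli with `m⁻ < m⁺`: a coalition `C` with
`|C| < t` has `∏ i ∈ C, m i ≤ m⁻`, and one with `|C| ≥ t` has `∏ i ∈ C, m i ≥ m⁺`. -/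
theorem coalition_product_bounds (n t : ℕ) (ht1 : 1 ≤ t) (htn : t ≤ n)
    (m : Fin n → ℤ) (hpos : ∀ i, 0 < m i) (hmono : StrictMono m)
    (hcond : mignotteLo n t m < mignotteHi n t m) :
    ∀ C : Finset (Fin n),
      (C.card < t → ∏ i ∈ C, m i ≤ mignotteLo n t m) ∧
      (t ≤ C.card → mignotteHi n t m ≤ ∏ i ∈ C, m i) := by
  intro C
  have hone : ∀ i, 1 ≤ m i := fun i => by have := hpos i; omega
  set k := C.card with hkdef
  have hkn : k ≤ n := by
    have := Finset.card_le_card (Finset.subset_univ C)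
    simpa using this
  set f := C.orderEmbOfFin (rfl : C.card = k) with hfdef
  have hprod : ∏ i ∈ C, m i = ∏ j : Fin k, m (f j) := by
    refine (Finset.prod_bij (fun (j : Fin k) _ => f j) ?_ ?_ ?_ ?_).symm
    · intro j _; exact C.orderEmbOfFin_mem rfl j
    · intro a _ b _ hab; exact f.injective hab
    · intro i hi
      have : i ∈ Set.range f := by
        rw [hfdef, Finset.range_orderEmbOfFin]; exact hi
      obtain ⟨j, hj⟩ := this
      exact ⟨j, Finset.mem_univ _, hj⟩
    · intro j _; rfl
  have hfmono : StrictMono f := f.strictMono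
  constructor
  · -- upper bound
    intro hk
    have hbound : ∀ j : Fin k, n - k + (j : ℕ) < n := fun j => by
      have := j.isLt; omega
    calc ∏ i ∈ C, m i = ∏ j : Fin k, m (f j) := hprod
      _ ≤ ∏ j : Fin k, m ⟨n - k + (j : ℕ), hbound j⟩ := by
          refine Finset.prod_le_prod (fun j _ => le_of_lt (hpos _)) (fun j _ => ?_)
          refine hmono.monotone ?_
          rw [Fin.le_def]
          have := mignotte_strictMono_val_ge f hfmono (k - 1 - (j : ℕ)) (j : ℕ) j.isLt
            (by have := j.isLt; omega)
          simpa using this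
      _ = ∏ i ∈ Finset.univ.filter (fun i : Fin n => n - k ≤ (i : ℕ)), m i := by
          refine Finset.prod_bij (fun (j : Fin k) _ => (⟨n - k + (j : ℕ), hbound j⟩ : Fin n))
            ?_ ?_ ?_ ?_
          · intro j _; simp; omega
          · intro a _ b _ hab
            have := Fin.mk.injEq .. ▸ hab
            exact Fin.ext (by omega)
          · intro i hi
            simp only [Finset.mem_filter, Finset.mem_univ, true_and] at hi
            have hin := i.isLt
            refine ⟨⟨(i : ℕ) - (n - k), by omega⟩, Finset.mem_univ _, ?_⟩
            exact Fin.ext (by simp; omega)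
          · intro j _; rfl
      _ ≤ mignotteLo n t m := by
          refine mignotte_prod_subset_le ?_ m hone
          intro i hi
          simp only [Finset.mem_filter, Finset.mem_univ, true_and] at hi ⊢
          omega
  · -- lower bound
    intro hk
    calc mignotteHi n t m
        ≤ ∏ i ∈ Finset.univ.filter (fun i : Fin n => (i : ℕ) < k), m i := by
          refine mignotte_prod_subset_le ?_ m hone
          intro i hi
          simp only [Finset.mem_filter, Finset.mem_univ, true_and] at hi ⊢
          omega
      _ = ∏ j : Fin k, m (Fin.castLE hkn j) := by
          refine (Finset.prod_bij (fun (j : Fin k) _ => Fin.castLE hkn j) ?_ ?_ ?_ ?_).symm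
          · intro j _; simp [Fin.castLE]
          · intro a _ b _ hab
            exact Fin.ext (by simpa [Fin.castLE, Fin.ext_iff] using hab)
          · intro i hi
            simp only [Finset.mem_filter, Finset.mem_univ, true_and] at hi
            exact ⟨⟨(i : ℕ), hi⟩, Finset.mem_univ _, Fin.ext (by simp [Fin.castLE])⟩
          · intro j _; rfl
      _ ≤ ∏ j : Fin k, m (f j) := by
          refine Finset.prod_le_prod (fun j _ => le_of_lt (hpos _)) (fun j _ => ?_)
          refine hmono.monotone ?_
          rw [Fin.le_def]
          have := mignotte_strictMono_val_le f hfmono (j : ℕ) j.isLt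
          simpa [Fin.castLE] using this
      _ = ∏ i ∈ C, m i := hprod.symm
end
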